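/- Let φ : ℝ → ℝ be differentiable with φ'(x) ≥ 0 for all x, let κ ≥ 0, and suppose the function x ↦ e^{−κx} · φ'(x) is nonincreasing on ℝ. Then for all real numbers u ≤ v and all c ≥ 0, one has φ(u + c) − φ(u) ≥ e^{−κ(v − u)} · (φ(v + c) − φ(v)). -/

import Mathlib

/-- if `φ` is differentiable with nonnegative derivative `φ'`, `κ ≥ 0`, and
`x ↦ e^{−κx}·φ'(x)` is nonincreasing, then for `u ≤ v` and `c ≥ 0`,
`φ(u+c) − φ(u) ≥ e^{−κ(v−u)}·(φ(v+c) − φ(v))`. -/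
theorem increment_comparison_of_exp_antitone
    (φ φ' : ℝ → ℝ) (κ : ℝ) (hκ : 0 ≤ κ)
    (hd : ∀ x : ℝ, HasDerivAt φ (φ' x) x)
    (hφ'_nonneg : ∀ x : ℝ, 0 ≤ φ' x)
    (hanti : Antitone (fun x : ℝ => Real.exp (-κ * x) * φ' x)) :
    ∀ (u v c : ℝ), u ≤ v → 0 ≤ c →
      Real.exp (-κ * (v - u)) * (φ (v + c) - φ v) ≤ φ (u + c) - φ u := by
  intro u v c huv hc
  set e : ℝ := Real.exp (-κ * (v - u)) with he
  set ψ : ℝ → ℝ := fun x => φ (x + u - v) - e * φ x with hψ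
  have hψd : ∀ x : ℝ, HasDerivAt ψ (φ' (x + u - v) - e * φ' x) x := by
    intro x
    have h1 : HasDerivAt (fun x : ℝ => φ (x + u - v)) (φ' (x + u - v) * 1) x := by
      have := (hd (x + u - v)).comp x
          (((hasDerivAt_id x).add_const u).sub_const v)
      simpa [Function.comp_def] using this
    have h2 := h1.sub ((hd x).const_mul e)
    rw [mul_one] at h2
    exact h2
  have hmono : MonotoneOn ψ (Set.Icc v (v + c)) := by
    apply monotoneOn_of_deriv_nonneg (convex_Icc _ _)
    · exact (Differentiable.continuous (fun x => (hψd x).differentiableAt)).continuousOn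
    · intro x _
      exact ((hψd x).differentiableAt).differentiableWithinAt
    · intro x _
      rw [(hψd x).deriv]
      have key : e * φ' x ≤ φ' (x + u - v) := by
        have h := hanti (show x + u - v ≤ x by linarith)
        have h2 := mul_le_mul_of_nonneg_left h (Real.exp_pos (κ * x - κ * (v - u))).le
        have e1 : Real.exp (κ * x - κ * (v - u)) * (Real.exp (-κ * x) * φ' x)
            = e * φ' x := by
          rw [he, ← mul_assoc, ← Real.exp_add]; ring_nf
        have e2 : Real.exp (κ * x - κ * (v - u)) * (Real.exp (-κ * (x + u - v)) * φ' (x + u - v))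
            = φ' (x + u - v) := by
          rw [← mul_assoc, ← Real.exp_add, show κ * x - κ * (v - u) + -κ * (x + u - v) = 0 by ring,
            Real.exp_zero, one_mul]
        rw [e1, e2] at h2
        exact h2
      linarith
  have := hmono (Set.left_mem_Icc.2 (by linarith)) (Set.mem_Icc.2 ⟨le_add_of_nonneg_right hc, le_refl _⟩) (le_add_of_nonneg_right hc)
  simp only [hψ] at this
  have h3 : v + u - v = u := by ring
  have h4 : v + c + u - v = u + c := by ring
  rw [h3, h4] at this
  linarith
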